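/- Let s be the substitution on the alphabet {□, ■} with s(□) the 2×2 pattern having ■ at position (0,0) and □ at positions (1,0), (0,1), (1,1), and s(■) the 2×2 pattern having ■ at positions (0,0) and (1,1) and □ at positions (1,0), (0,1). Then the substitution subshift X_s is linearly net gluing. -/

import Mathlib

open Filter

abbrev Config (A : Type*) := ℤ × ℤ → A

def shiftC {A : Type*} (u : ℤ × ℤ) (x : Config A) : Config A := fun v => x (v + u)

def blockAt {A : Type*} (x : Config A) (u : ℤ × ℤ) (n : ℕ) : Fin n × Fin n → A :=
  fun v => x (u + (((v.1 : ℕ) : ℤ), ((v.2 : ℕ) : ℤ)))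

def IsSFT {A : Type*} (X : Set (Config A)) : Prop :=
  ∃ (r : ℕ) (F : Set (Fin r × Fin r → A)),
    X = {x : Config A | ∀ u : ℤ × ℤ, blockAt x u r ∉ F}

def Lang {A : Type*} (X : Set (Config A)) (n : ℕ) : Set (Fin n × Fin n → A) :=
  {p | ∃ x ∈ X, ∃ u : ℤ × ℤ, blockAt x u n = p}

def gluingSet {A : Type*} (X : Set (Config A)) {n : ℕ}
    (p q : Fin n × Fin n → A) : Set (ℤ × ℤ) :=
  {u | ∃ x ∈ X, blockAt x 0 n = q ∧ blockAt x u n = p}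

def normInf (u : ℤ × ℤ) : ℤ := max |u.1| |u.2|

def BlockGluing {A : Type*} (X : Set (Config A)) (f : ℕ → ℕ) : Prop :=
  ∀ n : ℕ, 1 ≤ n → ∀ p ∈ Lang X n, ∀ q ∈ Lang X n, ∀ u : ℤ × ℤ,
    (f n : ℤ) + (n : ℤ) ≤ normInf u → u ∈ gluingSet X p q

def NetGluing {A : Type*} (X : Set (Config A)) (f : ℕ → ℕ) : Prop :=
  ∃ (w : (n : ℕ) → (Fin n × Fin n → A) → (Fin n × Fin n → A) → ℤ × ℤ)
    (ft : (n : ℕ) → (Fin n × Fin n → A) → (Fin n × Fin n → A) → ℕ),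
    ∀ n : ℕ, ∀ p ∈ Lang X n, ∀ q ∈ Lang X n,
      (∀ v : ℤ × ℤ, v ≠ 0 →
        w n p q + ((n : ℤ) + (ft n p q : ℤ)) • v ∈ gluingSet X p q) ∧
      ft n p q ≤ f n

def LinearlyNetGluing {A : Type*} (X : Set (Config A)) : Prop :=
  ∃ g : ℕ → ℕ, Monotone g ∧ (∃ C : ℝ, 0 < C ∧ ∀ n : ℕ, (g n : ℝ) ≤ C * (n : ℝ)) ∧
    NetGluing X g

def boxSet (n : ℕ) : Set (ℤ × ℤ) :=
  {v | 0 ≤ v.1 ∧ v.1 < (n : ℤ) ∧ 0 ≤ v.2 ∧ v.2 < (n : ℤ)}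

/-- The 2×2 image of a letter under the substitution `s`: `■` at `(0,0)`, the letter
itself at `(1,1)`, and `□` elsewhere (`true` = `■`). -/
def sImg (a : Bool) (v : ℤ × ℤ) : Bool :=
  if v = (0, 0) then true else if v = (1, 1) then a else false

/-- `sIter n a` is the pattern `s^n(a)`, on support `⟦0,2^n-1⟧²`. -/
def sIter : ℕ → Bool → ℤ × ℤ → Bool
  | 0, a, _ => a
  | n + 1, a, v =>
      sIter n (sImg a (v.1 / 2 ^ n, v.2 / 2 ^ n)) (v.1 % 2 ^ n, v.2 % 2 ^ n)

/-- The substitution subshift `X_s`: configurations all of whose finite (square) patterns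
appear in some `s^n(a)`. -/
def Xsub : Set (Config Bool) :=
  {x | ∀ (k : ℕ) (u : ℤ × ℤ), ∃ (n : ℕ) (a : Bool) (w : ℤ × ℤ),
    (∀ v ∈ boxSet k, w + v ∈ boxSet (2 ^ n)) ∧
    ∀ v ∈ boxSet k, x (u + v) = sIter n a (w + v)}


/- ========== auxiliary development ========== -/

def nu (t : ℤ) : ℕ := t.natAbs.factorization 2

def Eb (a b : ℤ) : Bool :=
  (decide (a = 0) && decide (b = 0)) ||
    (decide (a ≠ 0) && decide (b ≠ 0) && decide (nu a = nu b))

lemma int_pow_dvd_iff {k : ℕ} {t : ℤ} : (2:ℤ)^k ∣ t ↔ 2^k ∣ t.natAbs := by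
  have h1 : ((2:ℤ)^k).natAbs = 2^k := by simp [Int.natAbs_pow]
  rw [← Int.natAbs_dvd_natAbs, h1]

lemma nu_pow_dvd (t : ℤ) : (2:ℤ)^(nu t) ∣ t := by
  rw [int_pow_dvd_iff]; exact Nat.ordProj_dvd _ 2

lemma nu_succ_not_dvd {t : ℤ} (ht : t ≠ 0) : ¬ (2:ℤ)^(nu t + 1) ∣ t := by
  rw [int_pow_dvd_iff, Nat.Prime.pow_dvd_iff_le_factorization Nat.prime_two
    (Int.natAbs_ne_zero.mpr ht)]
  unfold nu; omega

lemma nu_eq_of {t : ℤ} {k : ℕ} (ht : t ≠ 0) (h1 : (2:ℤ)^k ∣ t)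
    (h2 : ¬ (2:ℤ)^(k+1) ∣ t) : nu t = k := by
  rw [int_pow_dvd_iff] at h1 h2
  rw [Nat.Prime.pow_dvd_iff_le_factorization Nat.prime_two (Int.natAbs_ne_zero.mpr ht)] at h1 h2
  unfold nu; omega

lemma nu_lt {t : ℤ} {M : ℕ} (ht : t ≠ 0) (h : ¬ (2:ℤ)^M ∣ t) : nu t < M := by
  by_contra hc
  exact h (dvd_trans (pow_dvd_pow 2 (not_lt.mp hc)) (nu_pow_dvd t))

lemma nu_shift {t : ℤ} {M : ℕ} (s : ℤ) (ht : t ≠ 0) (h : nu t < M) :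
    t + 2^M * s ≠ 0 ∧ nu (t + 2^M * s) = nu t := by
  have hd : (2:ℤ)^(nu t) ∣ t + 2^M * s :=
    dvd_add (nu_pow_dvd t) (Dvd.dvd.mul_right (pow_dvd_pow 2 (le_of_lt h)) s)
  have hnd : ¬ (2:ℤ)^(nu t + 1) ∣ t + 2^M * s := by
    intro hc
    have h2 : (2:ℤ)^(nu t + 1) ∣ 2^M * s := Dvd.dvd.mul_right (pow_dvd_pow 2 h) s
    exact nu_succ_not_dvd ht (by simpa using dvd_sub hc h2)
  have hne : t + 2^M * s ≠ 0 := by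
    intro hc; rw [hc] at hnd; exact hnd (dvd_zero _)
  exact ⟨hne, nu_eq_of hne hd hnd⟩

lemma nu_mul_pow {s : ℤ} (M : ℕ) (hs : s ≠ 0) : nu (2^M * s) = M + nu s := by
  unfold nu
  rw [Int.natAbs_mul, Nat.factorization_mul (by positivity) (Int.natAbs_ne_zero.mpr hs)]
  simp [Int.natAbs_pow, Nat.Prime.factorization_pow Nat.prime_two]

lemma nu_two_pow (k : ℕ) : nu ((2:ℤ)^k) = k := by
  have := nu_mul_pow (s := 1) k one_ne_zero
  simpa [nu] using this

lemma nu_one : nu 1 = 0 := by simpa using nu_two_pow 0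

lemma Eb_zero_zero : Eb 0 0 = true := by simp [Eb]

lemma Eb_zero_left {b : ℤ} (h : b ≠ 0) : Eb 0 b = false := by simp [Eb, h]

lemma Eb_zero_right {a : ℤ} (h : a ≠ 0) : Eb a 0 = false := by simp [Eb, h]

lemma Ene {a b : ℤ} (ha : a ≠ 0) (hb : b ≠ 0) : Eb a b = decide (nu a = nu b) := by
  simp [Eb, ha, hb]

lemma nu_odd {a : ℤ} (h : ¬ (2:ℤ) ∣ a) : nu a = 0 := by
  have ha : a ≠ 0 := by rintro rfl; exact h (dvd_zero 2)
  have := nu_lt ha (M := 1) (by simpa using h)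
  omega

lemma odd_ne_zero {a : ℤ} (h : ¬ (2:ℤ) ∣ a) : a ≠ 0 := by
  rintro rfl; exact h (dvd_zero 2)

lemma Eb_odd_odd {a b : ℤ} (ha : ¬ (2:ℤ) ∣ a) (hb : ¬ (2:ℤ) ∣ b) : Eb a b = true := by
  rw [Ene (odd_ne_zero ha) (odd_ne_zero hb), nu_odd ha, nu_odd hb]; simp

lemma nu_pos_of_even {a : ℤ} (ha : a ≠ 0) (h : (2:ℤ) ∣ a) : 1 ≤ nu a := by
  by_contra hc
  have h0 : nu a = 0 := by omega
  exact nu_succ_not_dvd ha (by rw [h0]; simpa using h)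

lemma Eb_scale (M : ℕ) (a b : ℤ) : Eb (2^M * a) (2^M * b) = Eb a b := by
  rcases eq_or_ne a 0 with rfl | ha
  · rcases eq_or_ne b 0 with rfl | hb
    · simp
    · rw [mul_zero, Eb_zero_left hb, Eb_zero_left (by positivity : (2:ℤ)^M * b ≠ 0)]
  · rcases eq_or_ne b 0 with rfl | hb
    · rw [mul_zero, Eb_zero_right ha, Eb_zero_right (by positivity : (2:ℤ)^M * a ≠ 0)]
    · rw [Ene ha hb, Ene (by positivity : (2:ℤ)^M * a ≠ 0) (by positivity : (2:ℤ)^M * b ≠ 0),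
        nu_mul_pow M ha, nu_mul_pow M hb]
      simp [Nat.add_left_cancel_iff]

lemma Elow_left {M : ℕ} (c : ℤ) {b : ℤ} (hb : b ≠ 0) (hnb : nu b < M) :
    Eb (2^M * c) b = false := by
  rcases eq_or_ne c 0 with rfl | hc
  · rw [mul_zero]; exact Eb_zero_left hb
  · rw [Ene (by positivity) hb, nu_mul_pow M hc]
    simp; omega

lemma Elow_right {M : ℕ} (c : ℤ) {a : ℤ} (ha : a ≠ 0) (hna : nu a < M) :
    Eb a (2^M * c) = false := by
  rcases eq_or_ne c 0 with rfl | hc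
  · rw [mul_zero]; exact Eb_zero_right ha
  · rw [Ene ha (by positivity), nu_mul_pow M hc]
    simp; omega

lemma Ept (M : ℕ) (t1 t2 s1 s2 : ℤ)
    (h : ∀ i1 i2 : ℤ, t1 = 2^M * i1 → t2 = 2^M * i2 → Eb (i1+s1) (i2+s2) = Eb i1 i2) :
    Eb (t1 + 2^M * s1) (t2 + 2^M * s2) = Eb t1 t2 := by
  by_cases hd1 : (2:ℤ)^M ∣ t1 <;> by_cases hd2 : (2:ℤ)^M ∣ t2
  · obtain ⟨i1, rfl⟩ := hd1
    obtain ⟨i2, rfl⟩ := hd2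
    rw [← mul_add, ← mul_add, Eb_scale, Eb_scale]
    exact h i1 i2 rfl rfl
  · have ht2 : t2 ≠ 0 := by rintro rfl; exact hd2 (dvd_zero _)
    have hn2 := nu_lt ht2 hd2
    obtain ⟨hne2, hnu2⟩ := nu_shift s2 ht2 hn2
    obtain ⟨i1, rfl⟩ := hd1
    rw [← mul_add]
    rw [Elow_left _ hne2 (by omega), Elow_left _ ht2 hn2]
  · have ht1 : t1 ≠ 0 := by rintro rfl; exact hd1 (dvd_zero _)
    have hn1 := nu_lt ht1 hd1
    obtain ⟨hne1, hnu1⟩ := nu_shift s1 ht1 hn1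
    obtain ⟨i2, rfl⟩ := hd2
    rw [← mul_add]
    rw [Elow_right _ hne1 (by omega), Elow_right _ ht1 hn1]
  · have ht1 : t1 ≠ 0 := by rintro rfl; exact hd1 (dvd_zero _)
    have ht2 : t2 ≠ 0 := by rintro rfl; exact hd2 (dvd_zero _)
    obtain ⟨hne1, hnu1⟩ := nu_shift s1 ht1 (nu_lt ht1 hd1)
    obtain ⟨hne2, hnu2⟩ := nu_shift s2 ht2 (nu_lt ht2 hd2)
    rw [Ene hne1 hne2, Ene ht1 ht2, hnu1, hnu2]

lemma eq_one_of {P i t : ℤ} (hP : 0 < P) (ht : t = P * i) (h1 : 0 < t) (h2 : t ≤ P) :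
    i = 1 := by
  rcases lt_trichotomy i 1 with h | h | h
  · nlinarith
  · exact h
  · nlinarith

lemma Eb_pow_self (k : ℕ) : Eb ((2:ℤ)^k) ((2:ℤ)^k) = true := by
  rw [Ene (by positivity) (by positivity)]; simp

lemma Eb_two_pow_pow {j k : ℕ} (h : j ≠ k) : Eb ((2:ℤ)^j) ((2:ℤ)^k) = false := by
  rw [Ene (by positivity) (by positivity), nu_two_pow, nu_two_pow]; simpa using h

lemma main (m : ℕ) (a : Bool) (z : ℤ × ℤ) (hz : z ∈ boxSet (2^m)) :
    sIter m a z = if z.1 = 2^m - 1 ∧ z.2 = 2^m - 1 then a else Eb (z.1+1) (z.2+1) := by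
  induction m generalizing a z with
  | zero =>
    obtain ⟨h1, h2, h3, h4⟩ := hz
    norm_num at h2 h4
    have hz1 : z.1 = 0 := by omega
    have hz2 : z.2 = 0 := by omega
    simp [sIter, hz1, hz2]
  | succ m ih =>
    obtain ⟨h1, h2, h3, h4⟩ := hz
    push_cast at h2 h4
    have hP : (0:ℤ) < 2^m := by positivity
    have hPP : (2:ℤ)^(m+1) = 2^m * 2 := by ring
    rw [hPP] at h2 h4
    have e1 : 2^m * (z.1 / 2^m) + z.1 % 2^m = z.1 := Int.mul_ediv_add_emod z.1 (2^m)
    have e2 : 2^m * (z.2 / 2^m) + z.2 % 2^m = z.2 := Int.mul_ediv_add_emod z.2 (2^m)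
    have r1b : 0 ≤ z.1 % 2^m := Int.emod_nonneg z.1 (by positivity)
    have r1b' : z.1 % 2^m < 2^m := Int.emod_lt_of_pos z.1 hP
    have r2b : 0 ≤ z.2 % 2^m := Int.emod_nonneg z.2 (by positivity)
    have r2b' : z.2 % 2^m < 2^m := Int.emod_lt_of_pos z.2 hP
    have d1b : 0 ≤ z.1 / 2^m := Int.ediv_nonneg h1 hP.le
    have d2b : 0 ≤ z.2 / 2^m := Int.ediv_nonneg h3 hP.le
    have d1b' : z.1 / 2^m < 2 := by nlinarith
    have d2b' : z.2 / 2^m < 2 := by nlinarith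
    set d1 := z.1 / 2^m with hd1
    set d2 := z.2 / 2^m with hd2
    set r1 := z.1 % 2^m with hr1
    set r2 := z.2 % 2^m with hr2
    have hbox : (r1, r2) ∈ boxSet (2^m) := by
      refine ⟨r1b, ?_, r2b, ?_⟩ <;> push_cast <;> assumption
    have hstep : ∀ b : Bool, sIter (m+1) a z = sIter m (sImg a (d1, d2)) (r1, r2) :=
      fun _ => rfl
    rw [hstep true, ih (sImg a (d1, d2)) (r1, r2) hbox]
    dsimp only
    have hone : (1:ℤ) ≠ 0 := one_ne_zero
    rcases (by omega : d1 = 0 ∨ d1 = 1) with hc1 | hc1 <;>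
      rcases (by omega : d2 = 0 ∨ d2 = 1) with hc2 | hc2
    · -- quadrant (0,0) : letter true
      have hz1 : z.1 = r1 := by rw [← e1, hc1]; ring
      have hz2 : z.2 = r2 := by rw [← e2, hc2]; ring
      have hsi : sImg a (d1, d2) = true := by rw [hc1, hc2]; rfl
      rw [hsi]
      have hnc : ¬ (z.1 = 2^(m+1) - 1 ∧ z.2 = 2^(m+1) - 1) := by
        rw [hPP]; intro ⟨hh, _⟩; omega
      rw [if_neg hnc, hz1, hz2]
      by_cases hc : r1 = 2^m - 1 ∧ r2 = 2^m - 1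
      · rw [if_pos hc, hc.1, hc.2]
        have : (2:ℤ)^m - 1 + 1 = 2^m := by ring
        rw [this, Eb_pow_self]
      · rw [if_neg hc]
    · -- quadrant (0,1) : letter false
      have hz1 : z.1 = r1 := by rw [← e1, hc1]; ring
      have hz2 : z.2 = r2 + 2^m := by rw [← e2, hc2]; ring
      have hsi : sImg a (d1, d2) = false := by rw [hc1, hc2]; rfl
      rw [hsi]
      have hnc : ¬ (z.1 = 2^(m+1) - 1 ∧ z.2 = 2^(m+1) - 1) := by
        rw [hPP]; intro ⟨hh, _⟩; omega
      rw [if_neg hnc]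
      by_cases hc : r1 = 2^m - 1 ∧ r2 = 2^m - 1
      · rw [if_pos hc]
        rw [hz1, hz2, hc.1, hc.2]
        have e3 : (2:ℤ)^m - 1 + 1 = 2^m * 1 := by ring
        have e4 : (2:ℤ)^m - 1 + 2^m + 1 = 2^m * 2 := by ring
        rw [e3, e4, Eb_scale]
        rw [Ene hone (by norm_num), (by norm_num : (2:ℤ) = 2^1), nu_two_pow, nu_one]
        simp
      · rw [if_neg hc, hz1, hz2]
        have : Eb ((r1+1) + 2^m * 0) ((r2+1) + 2^m * 1) = Eb (r1+1) (r2+1) := by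
          apply Ept
          intro i1 i2 hi1 hi2
          have hi1' : i1 = 1 := eq_one_of hP hi1 (by linarith) (by linarith)
          have hi2' : i2 = 1 := eq_one_of hP hi2 (by linarith) (by linarith)
          rw [hi1'] at hi1
          rw [hi2'] at hi2
          exact absurd ⟨by linarith, by linarith⟩ hc
        convert this.symm using 2 <;> ring
    · -- quadrant (1,0) : letter false
      have hz1 : z.1 = r1 + 2^m := by rw [← e1, hc1]; ring
      have hz2 : z.2 = r2 := by rw [← e2, hc2]; ring
      have hsi : sImg a (d1, d2) = false := by rw [hc1, hc2]; rfl
      rw [hsi]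
      have hnc : ¬ (z.1 = 2^(m+1) - 1 ∧ z.2 = 2^(m+1) - 1) := by
        rw [hPP]; intro ⟨_, hh⟩; omega
      rw [if_neg hnc]
      by_cases hc : r1 = 2^m - 1 ∧ r2 = 2^m - 1
      · rw [if_pos hc]
        rw [hz1, hz2, hc.1, hc.2]
        have e3 : (2:ℤ)^m - 1 + 2^m + 1 = 2^m * 2 := by ring
        have e4 : (2:ℤ)^m - 1 + 1 = 2^m * 1 := by ring
        rw [e3, e4, Eb_scale]
        rw [Ene (by norm_num) hone, (by norm_num : (2:ℤ) = 2^1), nu_two_pow, nu_one]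
        simp
      · rw [if_neg hc, hz1, hz2]
        have : Eb ((r1+1) + 2^m * 1) ((r2+1) + 2^m * 0) = Eb (r1+1) (r2+1) := by
          apply Ept
          intro i1 i2 hi1 hi2
          have hi1' : i1 = 1 := eq_one_of hP hi1 (by linarith) (by linarith)
          have hi2' : i2 = 1 := eq_one_of hP hi2 (by linarith) (by linarith)
          rw [hi1'] at hi1
          rw [hi2'] at hi2
          exact absurd ⟨by linarith, by linarith⟩ hc
        convert this.symm using 2 <;> ring
    · -- quadrant (1,1) : letter a
      have hz1 : z.1 = r1 + 2^m := by rw [← e1, hc1]; ring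
      have hz2 : z.2 = r2 + 2^m := by rw [← e2, hc2]; ring
      have hsi : sImg a (d1, d2) = a := by rw [hc1, hc2]; rfl
      rw [hsi]
      by_cases hc : r1 = 2^m - 1 ∧ r2 = 2^m - 1
      · have hcz : z.1 = 2^(m+1) - 1 ∧ z.2 = 2^(m+1) - 1 := by
          rw [hPP]; constructor <;> omega
        rw [if_pos hc, if_pos hcz]
      · have hncz : ¬ (z.1 = 2^(m+1) - 1 ∧ z.2 = 2^(m+1) - 1) := by
          rw [hPP]; intro ⟨hh1, hh2⟩
          exact hc ⟨by omega, by omega⟩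
        rw [if_neg hc, if_neg hncz, hz1, hz2]
        have : Eb ((r1+1) + 2^m * 1) ((r2+1) + 2^m * 1) = Eb (r1+1) (r2+1) := by
          apply Ept
          intro i1 i2 hi1 hi2
          have hi1' : i1 = 1 := eq_one_of hP hi1 (by linarith) (by linarith)
          have hi2' : i2 = 1 := eq_one_of hP hi2 (by linarith) (by linarith)
          rw [hi1'] at hi1
          rw [hi2'] at hi2
          exact absurd ⟨by linarith, by linarith⟩ hc
        convert this.symm using 2 <;> ring

noncomputable def Fc : Config Bool := fun v => Eb (v.1+1) (v.2+1)

lemma idx_zero {P i t : ℤ} (hP : 0 < P) (ht : t = P * i) (h1 : -P < t) (h2 : t < P) :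
    i = 0 := by
  rcases lt_trichotomy i 0 with h | h | h
  · nlinarith
  · exact h
  · nlinarith

lemma no_idx {P t : ℤ} (hP : 0 < P) (h1 : 0 < t) (h2 : t < P) {i : ℤ} (ht : t = P * i) :
    False := by
  rcases le_or_gt i 0 with h | h
  · nlinarith
  · nlinarith

lemma maint (m : ℕ) (z : ℤ × ℤ) (hz : z ∈ boxSet (2^m)) :
    sIter m true z = Eb (z.1+1) (z.2+1) := by
  rw [main m true z hz]
  by_cases hc : z.1 = 2^m - 1 ∧ z.2 = 2^m - 1
  · rw [if_pos hc, hc.1, hc.2, (by ring : (2:ℤ)^m - 1 + 1 = 2^m), Eb_pow_self]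
  · rw [if_neg hc]

lemma mainf (m : ℕ) (z : ℤ × ℤ) (hz : z ∈ boxSet (2^m)) :
    sIter m false z = Eb (z.1 + 2^m + 1) (z.2+1) := by
  have hP : (0:ℤ) < 2^m := by positivity
  obtain ⟨h1, h2, h3, h4⟩ := hz
  push_cast at h2 h4
  rw [main m false z ⟨h1, by push_cast; exact h2, h3, by push_cast; exact h4⟩]
  by_cases hc1 : z.1 = 2^m - 1
  · by_cases hc2 : z.2 = 2^m - 1
    · rw [if_pos ⟨hc1, hc2⟩, hc1, hc2, (by ring : (2:ℤ)^m - 1 + 2^m + 1 = 2^(m+1)),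
        (by ring : (2:ℤ)^m - 1 + 1 = 2^m),
        Eb_two_pow_pow (by omega : m + 1 ≠ m)]
    · rw [if_neg (by tauto)]
      have ht2 : z.2 + 1 ≠ 0 := by omega
      have hn2 : nu (z.2+1) < m := by
        apply nu_lt ht2
        intro hd
        have := Int.le_of_dvd (by omega) hd
        omega
      rw [hc1, (by ring : (2:ℤ)^m - 1 + 1 = 2^m * 1),
        (by ring : (2:ℤ)^m - 1 + 2^m + 1 = 2^(m+1) * 1)]
      rw [Elow_left (M := m) 1 ht2 hn2, Elow_left (M := m+1) 1 ht2 (by omega)]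
  · rw [if_neg (by tauto)]
    have key : Eb ((z.1+1) + 2^m * 1) ((z.2+1) + 2^m * 0) = Eb (z.1+1) (z.2+1) := by
      apply Ept
      intro i1 i2 hi1 hi2
      exfalso
      exact no_idx hP (by omega) (by omega) hi1
    convert key.symm using 2 <;> ring

lemma Xsub_shift (c : ℤ × ℤ) {x : Config Bool} (hx : x ∈ Xsub) : shiftC c x ∈ Xsub := by
  intro k u
  obtain ⟨n, a, w, hbox, heq⟩ := hx k (u + c)
  refine ⟨n, a, w, hbox, fun v hv => ?_⟩
  have harg : u + v + c = u + c + v := by ring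
  show x (u + v + c) = _
  rw [harg]
  exact heq v hv

lemma F_mem : Fc ∈ Xsub := by
  intro k u
  set N := u.1.natAbs + u.2.natAbs + k + 2 with hN
  have hN2 : ((u.1.natAbs + u.2.natAbs + k + 2 : ℕ) : ℤ) < 2^N := by
    exact_mod_cast (Nat.lt_two_pow_self (n := N))
  push_cast at hN2
  have hk0 : (0:ℤ) ≤ (k:ℤ) := Int.natCast_nonneg k
  have hPP : (2:ℤ)^(N+1) = 2^N * 2 := by ring
  have hP : (0:ℤ) < 2^N := by positivity
  refine ⟨N+1, true, u + ((2:ℤ)^N, (2:ℤ)^N), fun v hv => ?_, fun v hv => ?_⟩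
  · obtain ⟨g1, g2, g3, g4⟩ := hv
    refine ⟨?_, ?_, ?_, ?_⟩ <;> push_cast <;> simp only [Prod.fst_add, Prod.snd_add] <;>
      linarith [neg_abs_le u.1, le_abs_self u.1, neg_abs_le u.2, le_abs_self u.2,
        abs_nonneg u.1, abs_nonneg u.2]
  · obtain ⟨g1, g2, g3, g4⟩ := hv
    have hbm : u + ((2:ℤ)^N, (2:ℤ)^N) + v ∈ boxSet (2^(N+1)) := by
      refine ⟨?_, ?_, ?_, ?_⟩ <;> push_cast <;> simp only [Prod.fst_add, Prod.snd_add] <;>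
        linarith [neg_abs_le u.1, le_abs_self u.1, neg_abs_le u.2, le_abs_self u.2,
          abs_nonneg u.1, abs_nonneg u.2]
    rw [maint (N+1) _ hbm]
    have key : Eb ((u.1+v.1+1) + 2^N * 1) ((u.2+v.2+1) + 2^N * 1) =
        Eb (u.1+v.1+1) (u.2+v.2+1) := by
      apply Ept
      intro i1 i2 hi1 hi2
      have hi1' : i1 = 0 := idx_zero hP hi1
        (by linarith [neg_abs_le u.1, abs_nonneg u.2])
        (by linarith [le_abs_self u.1, abs_nonneg u.2])
      have hi2' : i2 = 0 := idx_zero hP hi2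
        (by linarith [neg_abs_le u.2, abs_nonneg u.1])
        (by linarith [le_abs_self u.2, abs_nonneg u.1])
      rw [hi1', hi2']
      norm_num [Eb_zero_zero]
      rw [Ene one_ne_zero one_ne_zero]
      simp
    show Eb ((u+v).1 + 1) ((u+v).2+1) = _
    convert key.symm using 2 <;> simp only [Prod.fst_add, Prod.snd_add] <;> ring

lemma lang_F {n : ℕ} {p : Fin n × Fin n → Bool} (hp : p ∈ Lang Xsub n) :
    ∃ y : ℤ × ℤ, blockAt Fc y n = p := by
  obtain ⟨x, hx, u, hb⟩ := hp
  obtain ⟨m, a, w, hbox, heq⟩ := hx n u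
  have hmem : ∀ v : Fin n × Fin n,
      (((v.1 : ℕ) : ℤ), ((v.2 : ℕ) : ℤ)) ∈ boxSet n := by
    intro v
    have hl1 : ((v.1 : ℕ) : ℤ) < n := by exact_mod_cast v.1.isLt
    have hl2 : ((v.2 : ℕ) : ℤ) < n := by exact_mod_cast v.2.isLt
    exact ⟨Int.natCast_nonneg _, hl1, Int.natCast_nonneg _, hl2⟩
  cases a
  · -- a = false
    refine ⟨w + ((2:ℤ)^m, 0), funext fun v => ?_⟩
    have h1 := heq _ (hmem v)
    have h2 := mainf m _ (hbox _ (hmem v))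
    rw [h2] at h1
    show Fc (w + ((2:ℤ)^m, 0) + (((v.1 : ℕ) : ℤ), ((v.2 : ℕ) : ℤ))) = p v
    rw [← hb]
    show Eb _ _ = x _
    rw [h1]
    congr 1 <;> simp only [Prod.fst_add, Prod.snd_add] <;> ring
  · -- a = true
    refine ⟨w, funext fun v => ?_⟩
    have h1 := heq _ (hmem v)
    have h2 := maint m _ (hbox _ (hmem v))
    rw [h2] at h1
    show Fc (w + (((v.1 : ℕ) : ℤ), ((v.2 : ℕ) : ℤ))) = p v
    rw [← hb]
    exact h1.symm

lemma solve (d1 d2 : ℤ) (h1 : ¬ (2:ℤ) ∣ d1) (h2 : ¬ (2:ℤ) ∣ d2) (b b' : Bool) :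
    ∃ z1 z2 : ℤ, Eb z1 z2 = b ∧ Eb (z1+d1) (z2+d2) = b' := by
  have htwo : (2:ℤ) = 2^1 := by norm_num
  have hfour : (4:ℤ) = 2^2 := by norm_num
  have e22 : Eb 2 2 = true := by rw [htwo]; exact Eb_pow_self 1
  have e24 : Eb 2 4 = false := by rw [htwo, hfour]; exact Eb_two_pow_pow (by omega)
  have e12 : Eb 1 2 = false := by
    rw [Ene one_ne_zero (by norm_num), nu_one, htwo, nu_two_pow]; simp
  cases b <;> cases b'
  · refine ⟨1, 2, e12, ?_⟩
    have hodd2 : ¬ (2:ℤ) ∣ (2 + d2) := by omega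
    have hev1 : (2:ℤ) ∣ (1 + d1) := by omega
    rcases eq_or_ne (1 + d1) 0 with h0 | h0
    · rw [h0]; exact Eb_zero_left (odd_ne_zero hodd2)
    · rw [Ene h0 (odd_ne_zero hodd2), nu_odd hodd2]
      have := nu_pos_of_even h0 hev1
      simp; omega
  · exact ⟨2, 4, e24, Eb_odd_odd (by omega) (by omega)⟩
  · refine ⟨2-d1, 4-d2, Eb_odd_odd (by omega) (by omega), ?_⟩
    rw [(by ring : 2 - d1 + d1 = (2:ℤ)), (by ring : 4 - d2 + d2 = (4:ℤ))]
    exact e24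
  · exact ⟨2, 2, e22, Eb_odd_odd (by omega) (by omega)⟩

lemma idx_eq {M n : ℕ} (hn : n ≤ 2^M) {y v v' : ℤ × ℤ}
    (hv : v ∈ boxSet n) (hv' : v' ∈ boxSet n)
    {i1 i2 i1' i2' : ℤ}
    (h1 : y.1+v.1+1 = 2^M*i1) (h2 : y.2+v.2+1 = 2^M*i2)
    (h1' : y.1+v'.1+1 = 2^M*i1') (h2' : y.2+v'.2+1 = 2^M*i2') :
    i1 = i1' ∧ i2 = i2' := by
  obtain ⟨a1, a2, a3, a4⟩ := hv
  obtain ⟨b1, b2, b3, b4⟩ := hv'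
  have hP : (0:ℤ) < 2^M := by positivity
  have hnM : (n:ℤ) ≤ 2^M := by exact_mod_cast hn
  have key : ∀ a a' j j' : ℤ, 0 ≤ a → a < (n:ℤ) → 0 ≤ a' → a' < (n:ℤ) →
      (2:ℤ)^M*j - 2^M*j' = a - a' → j = j' := by
    intro a a' j j' ha1 ha2 ha3 ha4 heq
    have hd : (2:ℤ)^M ∣ (a - a') := ⟨j - j', by linarith [mul_sub ((2:ℤ)^M) j j']⟩
    have h0 : a - a' = 0 := Int.eq_zero_of_abs_lt_dvd hd (abs_lt.mpr ⟨by linarith, by linarith⟩)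
    have : (2:ℤ)^M * j = 2^M * j' := by linarith [mul_sub ((2:ℤ)^M) j j']
    exact mul_left_cancel₀ (ne_of_gt hP) this
  exact ⟨key v.1 v'.1 i1 i1' a1 a2 b1 b2 (by linarith),
    key v.2 v'.2 i2 i2' a3 a4 b3 b4 (by linarith)⟩

lemma block_transfer (M n : ℕ) (y s : ℤ × ℤ)
    (h : ∀ v ∈ boxSet n, ∀ i1 i2 : ℤ, y.1+v.1+1 = 2^M*i1 → y.2+v.2+1 = 2^M*i2 →
      Eb (i1+s.1) (i2+s.2) = Eb i1 i2) :
    ∀ v ∈ boxSet n, Fc (y.1 + 2^M*s.1 + v.1, y.2 + 2^M*s.2 + v.2) = Fc (y.1+v.1, y.2+v.2) := by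
  intro v hv
  show Eb _ _ = Eb _ _
  have key : Eb ((y.1+v.1+1) + 2^M*s.1) ((y.2+v.2+1) + 2^M*s.2) =
      Eb (y.1+v.1+1) (y.2+v.2+1) := Ept M _ _ _ _ (h v hv)
  convert key using 2 <;> ring

open Classical in
noncomputable def yOf (n : ℕ) (p : Fin n × Fin n → Bool) : ℤ × ℤ :=
  if h : ∃ y, blockAt Fc y n = p then h.choose else 0

lemma yOf_spec {n : ℕ} {p : Fin n × Fin n → Bool} (hp : p ∈ Lang Xsub n) :
    blockAt Fc (yOf n p) n = p := by
  have hex : ∃ y, blockAt Fc y n = p := lang_F hp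
  rw [yOf]
  rw [dif_pos hex]
  exact hex.choose_spec

def Mn (n : ℕ) : ℕ := Nat.log 2 n + 1

def dpP (n : ℕ) (p : Fin n × Fin n → Bool) : Prop :=
  ∃ v : ℤ × ℤ, v ∈ boxSet n ∧ ((2:ℤ)^(Mn n) ∣ ((yOf n p).1 + v.1 + 1)) ∧
    ((2:ℤ)^(Mn n) ∣ ((yOf n p).2 + v.2 + 1))

open Classical in
noncomputable def idx (n : ℕ) (p : Fin n × Fin n → Bool) : ℤ × ℤ :=
  if h : dpP n p then
    (((yOf n p).1 + h.choose.1 + 1) / 2^(Mn n), ((yOf n p).2 + h.choose.2 + 1) / 2^(Mn n))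
  else 0

lemma dp_spec {n : ℕ} {p : Fin n × Fin n → Bool} (h : dpP n p) :
    h.choose ∈ boxSet n ∧
    (yOf n p).1 + h.choose.1 + 1 = 2^(Mn n) * (idx n p).1 ∧
    (yOf n p).2 + h.choose.2 + 1 = 2^(Mn n) * (idx n p).2 := by
  obtain ⟨hb, hd1, hd2⟩ := h.choose_spec
  refine ⟨hb, ?_, ?_⟩ <;> rw [idx, dif_pos h]
  · exact (Int.mul_ediv_cancel' hd1).symm
  · exact (Int.mul_ediv_cancel' hd2).symm

noncomputable def w0 (n : ℕ) (p q : Fin n × Fin n → Bool) : ℤ × ℤ :=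
  (if (2:ℤ) ∣ ((idx n p).1 - (idx n q).1) then 1 else 0,
   if (2:ℤ) ∣ ((idx n p).2 - (idx n q).2) then 1 else 0)

noncomputable def wD (n : ℕ) (p q : Fin n × Fin n → Bool) : ℤ × ℤ :=
  ((yOf n p).1 - (yOf n q).1 + 2^(Mn n) * (w0 n p q).1,
   (yOf n p).2 - (yOf n q).2 + 2^(Mn n) * (w0 n p q).2)

noncomputable def ftD (n : ℕ) (p q : Fin n × Fin n → Bool) : ℕ :=
  if n = 0 then 0 else 2^(Mn n + 1) - n

/-- The substitution subshift `X_s` is linearly net gluing. -/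
theorem stmt19 : LinearlyNetGluing Xsub := by
  classical
  refine ⟨fun n => 3*n, fun a b hab => by dsimp; omega,
    ⟨3, by norm_num, fun n => by push_cast; linarith⟩, wD, ftD, ?_⟩
  intro n p hp q hq
  have hmemv : ∀ v : Fin n × Fin n,
      (((v.1 : ℕ) : ℤ), ((v.2 : ℕ) : ℤ)) ∈ boxSet n := by
    intro v
    have hl1 : ((v.1 : ℕ) : ℤ) < n := by exact_mod_cast v.1.isLt
    have hl2 : ((v.2 : ℕ) : ℤ) < n := by exact_mod_cast v.2.isLt
    exact ⟨Int.natCast_nonneg _, hl1, Int.natCast_nonneg _, hl2⟩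
  constructor
  · intro e _he
    by_cases hn : n = 0
    · subst hn
      refine ⟨Fc, F_mem, ?_, ?_⟩ <;> funext v <;> exact absurd v.1.isLt (by omega)
    · -- main case
      have hnM : n < 2^(Mn n) := Nat.lt_pow_succ_log_self (by norm_num) n
      have hps : (2:ℤ)^(Mn n + 1) = 2^(Mn n) * 2 := by ring
      have hle : n ≤ 2^(Mn n + 1) := by
        have h2 : 2^(Mn n + 1) = 2 * 2^(Mn n) := by rw [pow_succ]; ring
        omega
      have hft : ftD n p q = 2^(Mn n + 1) - n := if_neg hn
      have hcast : (n:ℤ) + (ftD n p q : ℤ) = 2^(Mn n + 1) := by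
        rw [hft, Nat.cast_sub hle]
        push_cast
        ring
      have hbp : blockAt Fc (yOf n p) n = p := yOf_spec hp
      have hbq : blockAt Fc (yOf n q) n = q := yOf_spec hq
      -- find the shift s
      suffices hS : ∃ s : ℤ × ℤ,
          (∀ v ∈ boxSet n, ∀ i1 i2 : ℤ, (yOf n q).1+v.1+1 = 2^(Mn n)*i1 →
            (yOf n q).2+v.2+1 = 2^(Mn n)*i2 → Eb (i1+s.1) (i2+s.2) = Eb i1 i2) ∧
          (∀ v ∈ boxSet n, ∀ i1 i2 : ℤ, (yOf n p).1+v.1+1 = 2^(Mn n)*i1 →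
            (yOf n p).2+v.2+1 = 2^(Mn n)*i2 →
            Eb (i1+(s.1+(w0 n p q).1+2*e.1)) (i2+(s.2+(w0 n p q).2+2*e.2)) = Eb i1 i2) by
        obtain ⟨s, hq_cond, hp_cond⟩ := hS
        refine ⟨shiftC ((yOf n q).1 + 2^(Mn n)*s.1, (yOf n q).2 + 2^(Mn n)*s.2) Fc,
          Xsub_shift _ F_mem, ?_, ?_⟩
        · funext v
          have ht := block_transfer (Mn n) n (yOf n q) s hq_cond _ (hmemv v)
          show Fc ((0:ℤ×ℤ) + (((v.1 : ℕ) : ℤ), ((v.2 : ℕ) : ℤ)) +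
            ((yOf n q).1 + 2^(Mn n)*s.1, (yOf n q).2 + 2^(Mn n)*s.2)) = q v
          have harg : (0:ℤ×ℤ) + (((v.1 : ℕ) : ℤ), ((v.2 : ℕ) : ℤ)) +
              ((yOf n q).1 + 2^(Mn n)*s.1, (yOf n q).2 + 2^(Mn n)*s.2) =
              ((yOf n q).1 + 2^(Mn n)*s.1 + ((v.1 : ℕ) : ℤ),
               (yOf n q).2 + 2^(Mn n)*s.2 + ((v.2 : ℕ) : ℤ)) := by
            refine Prod.ext ?_ ?_ <;> simp only [Prod.fst_add, Prod.snd_add, Prod.fst_zero, Prod.snd_zero] <;> ring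
          rw [harg, ht]
          exact congrFun hbq v
        · funext v
          have ht := block_transfer (Mn n) n (yOf n p)
            (s.1+(w0 n p q).1+2*e.1, s.2+(w0 n p q).2+2*e.2) hp_cond _ (hmemv v)
          show Fc ((wD n p q + ((n:ℤ) + (ftD n p q : ℤ)) • e) +
            (((v.1 : ℕ) : ℤ), ((v.2 : ℕ) : ℤ)) +
            ((yOf n q).1 + 2^(Mn n)*s.1, (yOf n q).2 + 2^(Mn n)*s.2)) = p v
          have harg : (wD n p q + ((n:ℤ) + (ftD n p q : ℤ)) • e) +
              (((v.1 : ℕ) : ℤ), ((v.2 : ℕ) : ℤ)) +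
              ((yOf n q).1 + 2^(Mn n)*s.1, (yOf n q).2 + 2^(Mn n)*s.2) =
              ((yOf n p).1 + 2^(Mn n)*(s.1+(w0 n p q).1+2*e.1) + ((v.1 : ℕ) : ℤ),
               (yOf n p).2 + 2^(Mn n)*(s.2+(w0 n p q).2+2*e.2) + ((v.2 : ℕ) : ℤ)) := by
            refine Prod.ext ?_ ?_ <;>
              simp only [Prod.fst_add, Prod.snd_add, Prod.smul_fst, Prod.smul_snd,
                smul_eq_mul, wD] <;>
              rw [hcast, hps] <;> ring
          rw [harg, ht]
          exact congrFun hbp v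
      -- now construct s
      by_cases hDp : dpP n p
      · by_cases hDq : dpP n q
        · -- both windows contain a double point
          obtain ⟨hbvq, ej1, ej2⟩ := dp_spec hDq
          obtain ⟨hbvp, ei1, ei2⟩ := dp_spec hDp
          have hodd1 : ¬ (2:ℤ) ∣ ((idx n p).1 - (idx n q).1 + (w0 n p q).1 + 2*e.1) := by
            by_cases hA : (2:ℤ) ∣ ((idx n p).1 - (idx n q).1) <;>
              simp only [w0, if_pos, if_neg, hA, if_true, if_false] <;> omega
          have hodd2 : ¬ (2:ℤ) ∣ ((idx n p).2 - (idx n q).2 + (w0 n p q).2 + 2*e.2) := by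
            by_cases hA : (2:ℤ) ∣ ((idx n p).2 - (idx n q).2) <;>
              simp only [w0, if_pos, if_neg, hA, if_true, if_false] <;> omega
          obtain ⟨z1, z2, hz1, hz2⟩ := solve _ _ hodd1 hodd2
            (Eb (idx n q).1 (idx n q).2) (Eb (idx n p).1 (idx n p).2)
          refine ⟨(z1 - (idx n q).1, z2 - (idx n q).2), ?_, ?_⟩
          · intro v hv i1 i2 h1 h2
            obtain ⟨hq1, hq2⟩ := idx_eq (le_of_lt hnM) hv hbvq h1 h2 ej1 ej2
            rw [hq1, hq2,
              (by ring : (idx n q).1 + (z1 - (idx n q).1) = z1),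
              (by ring : (idx n q).2 + (z2 - (idx n q).2) = z2)]
            exact hz1
          · intro v hv i1 i2 h1 h2
            obtain ⟨hq1, hq2⟩ := idx_eq (le_of_lt hnM) hv hbvp h1 h2 ei1 ei2
            rw [hq1, hq2]
            rw [(by ring : (idx n p).1 + (z1 - (idx n q).1 + (w0 n p q).1 + 2*e.1) =
              z1 + ((idx n p).1 - (idx n q).1 + (w0 n p q).1 + 2*e.1)),
              (by ring : (idx n p).2 + (z2 - (idx n q).2 + (w0 n p q).2 + 2*e.2) =
              z2 + ((idx n p).2 - (idx n q).2 + (w0 n p q).2 + 2*e.2))]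
            exact hz2
        · -- only p's window contains a double point
          refine ⟨(-((w0 n p q).1+2*e.1), -((w0 n p q).2+2*e.2)), ?_, ?_⟩
          · intro v hv i1 i2 h1 h2
            exact absurd ⟨v, hv, ⟨i1, h1⟩, ⟨i2, h2⟩⟩ hDq
          · intro v hv i1 i2 h1 h2
            rw [(by ring : i1 + (-((w0 n p q).1+2*e.1) + (w0 n p q).1 + 2*e.1) = i1),
              (by ring : i2 + (-((w0 n p q).2+2*e.2) + (w0 n p q).2 + 2*e.2) = i2)]
      · -- p's window contains no double point
        refine ⟨(0, 0), ?_, ?_⟩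
        · intro v hv i1 i2 h1 h2
          rw [add_zero, add_zero]
        · intro v hv i1 i2 h1 h2
          exact absurd ⟨v, hv, ⟨i1, h1⟩, ⟨i2, h2⟩⟩ hDp
  · -- the gap bound
    by_cases hn : n = 0
    · simp [ftD, hn]
    · show ftD n p q ≤ 3 * n
      rw [ftD, if_neg hn]
      have hlog : 2^(Nat.log 2 n) ≤ n := Nat.pow_log_le_self 2 hn
      have h4 : 2^(Mn n + 1) = 4 * 2^(Nat.log 2 n) := by
        show 2^(Nat.log 2 n + 1 + 1) = _
        rw [pow_succ, pow_succ]; ring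
      omega
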